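/- There exists a solvable MPP instance (G, R, x_I, x_G) such that no solution simultaneously attains the minimum total arrival time and the minimum makespan; i.e., every solution whose makespan equals the minimum makespan over all solutions has total arrival time strictly greater than the minimum total arrival time over all solutions. -/

import Mathlib

/-!
Formalization of multi-robot path planning on graphs (MPP).

An MPP instance consists of a connected simple graph `G` on a vertex type `V`,
a finite set of robots (an index type `R`), and injective start/goal
configurations `xI xG : R → V`.  A scheduled path is a map `ℕ → V`.
-/

namespace MPPFormal

variable {V R : Type}

/-- The arrival time of a path `p` with goal `g`: the smallest time `t`
with `p t = g`. -/
noncomputable def arrivalTime (g : V) (p : ℕ → V) : ℕ := sInf {t | p t = g}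

/-- A feasible scheduled path from `s` to `g` in the graph `G`:
it starts at `s`, reaches `g` at some time, stays at `g` forever after the
first time it reaches `g`, and at every time step it either traverses an
edge of `G` or stays put. -/
def FeasiblePath (G : SimpleGraph V) (s g : V) (p : ℕ → V) : Prop :=
  p 0 = s ∧ (∃ t, p t = g) ∧ (∀ t, arrivalTime g p ≤ t → p t = g) ∧
    ∀ t, G.Adj (p t) (p (t + 1)) ∨ p t = p (t + 1)

/-- Two scheduled paths collide if they meet at the same vertex at the same
time, or if they swap along an edge head-on. -/
def Collide (p q : ℕ → V) : Prop :=
  (∃ t, p t = q t) ∨ ∃ t, p t = q (t + 1) ∧ p (t + 1) = q t ∧ p t ≠ p (t + 1)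

/-- The length of a scheduled path: the number of time steps at which it
actually moves. -/
noncomputable def pathLen (p : ℕ → V) : ℕ := Set.ncard {t | p t ≠ p (t + 1)}

/-- A solution to the MPP instance `(G, R, xI, xG)`: a family of pairwise
non-colliding feasible paths, one per robot. -/
def IsSolution (G : SimpleGraph V) (xI xG : R → V) (p : R → ℕ → V) : Prop :=
  (∀ i, FeasiblePath G (xI i) (xG i) (p i)) ∧
    Pairwise fun i j => ¬ Collide (p i) (p j)

/-- `(G, xI, xG)` together with the robot index type `R` forms an MPP
instance: the graph is connected and the start and goal configurations are
injective. -/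
def IsMPPInstance (G : SimpleGraph V) (xI xG : R → V) : Prop :=
  G.Connected ∧ Function.Injective xI ∧ Function.Injective xG

variable [Fintype R]

/-- Total arrival time of a solution. -/
noncomputable def totalTime (xG : R → V) (p : R → ℕ → V) : ℕ :=
  ∑ i, arrivalTime (xG i) (p i)

/-- Makespan (last arrival time) of a solution. -/
noncomputable def makespan (xG : R → V) (p : R → ℕ → V) : ℕ :=
  Finset.univ.sup fun i => arrivalTime (xG i) (p i)

/-- Total distance traveled in a solution. -/
noncomputable def totalDist (p : R → ℕ → V) : ℕ := ∑ i, pathLen (p i)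

/-- Maximum single-robot distance of a solution. -/
noncomputable def maxDist (p : R → ℕ → V) : ℕ :=
  Finset.univ.sup fun i => pathLen (p i)

/-- Minimum total arrival time over all solutions. -/
noncomputable def minTotalTime (G : SimpleGraph V) (xI xG : R → V) : ℕ :=
  sInf {c | ∃ p, IsSolution G xI xG p ∧ totalTime xG p = c}

/-- Minimum makespan over all solutions. -/
noncomputable def minMakespan (G : SimpleGraph V) (xI xG : R → V) : ℕ :=
  sInf {c | ∃ p, IsSolution G xI xG p ∧ makespan xG p = c}

/-- Minimum total distance over all solutions. -/
noncomputable def minTotalDist (G : SimpleGraph V) (xI xG : R → V) : ℕ :=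
  sInf {c | ∃ p, IsSolution G xI xG p ∧ totalDist p = c}

/-- Minimum maximum distance over all solutions. -/
noncomputable def minMaxDist (G : SimpleGraph V) (xI xG : R → V) : ℕ :=
  sInf {c | ∃ p, IsSolution G xI xG p ∧ maxDist p = c}

end MPPFormal

namespace MPPFormal

/-! ### Auxiliary: a concrete 8-vertex instance -/

def edgeList : List (Fin 8 × Fin 8) := [(0,3),(1,2),(2,3),(3,4),(4,5),(2,6),(6,7),(7,4)]

def adj8 (x y : Fin 8) : Prop := (x,y) ∈ edgeList ∨ (y,x) ∈ edgeList

instance : DecidableRel adj8 := fun _ _ => inferInstanceAs (Decidable (_ ∨ _))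

def G8 : SimpleGraph (Fin 8) where
  Adj := adj8
  symm := ⟨fun _ _ h => h.elim Or.inr Or.inl⟩
  loopless := by
    have h : ∀ x : Fin 8, ¬ adj8 x x := by decide
    exact ⟨h⟩

instance : DecidableRel G8.Adj := fun x y => inferInstanceAs (Decidable (adj8 x y))

def phi8 : Fin 8 → ℕ := ![3,4,3,2,1,0,3,2]

lemma phi8_adj : ∀ x y : Fin 8, G8.Adj x y → phi8 x ≤ phi8 y + 1 ∧ phi8 y ≤ phi8 x + 1 := by
  decide

lemma force1 : ∀ v : Fin 8, (G8.Adj 1 v ∨ (1:Fin 8) = v) → phi8 v ≤ 3 → v = 2 := by decide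

lemma force2 : ∀ v : Fin 8, (G8.Adj 2 v ∨ (2:Fin 8) = v) → phi8 v ≤ 2 → v = 3 := by decide

lemma G8_conn : G8.Connected := by
  have h : ∀ v : Fin 8, G8.Reachable v 3 := by
    intro v
    fin_cases v
    · exact (show G8.Adj 0 3 by decide).reachable
    · exact ((show G8.Adj 1 2 by decide).reachable).trans (show G8.Adj 2 3 by decide).reachable
    · exact (show G8.Adj 2 3 by decide).reachable
    · exact SimpleGraph.Reachable.refl 3
    · exact (show G8.Adj 4 3 by decide).reachable
    · exact ((show G8.Adj 5 4 by decide).reachable).trans (show G8.Adj 4 3 by decide).reachable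
    · exact ((show G8.Adj 6 2 by decide).reachable).trans (show G8.Adj 2 3 by decide).reachable
    · exact ((show G8.Adj 7 4 by decide).reachable).trans (show G8.Adj 4 3 by decide).reachable
  exact (SimpleGraph.connected_iff _).mpr ⟨fun u v => (h u).trans (h v).symm, ⟨3⟩⟩

/-! ### arrivalTime helpers -/

lemma arrivalTime_le {V : Type} {g : V} {p : ℕ → V} {k : ℕ} (h : p k = g) :
    arrivalTime g p ≤ k := Nat.sInf_le h

lemma arrivalTime_eq {V : Type} {g : V} {p : ℕ → V} {k : ℕ} (h : p k = g)
    (h2 : ∀ j, j < k → p j ≠ g) : arrivalTime g p = k := by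
  refine le_antisymm (Nat.sInf_le h) ?_
  by_contra hc
  push_neg at hc
  exact h2 _ hc (Nat.sInf_mem (⟨k, h⟩ : Set.Nonempty {t | p t = g}))

lemma phi8_walk {p : ℕ → Fin 8} (hp : ∀ t, G8.Adj (p t) (p (t+1)) ∨ p t = p (t+1)) :
    ∀ s t, phi8 (p (s+t)) ≤ phi8 (p s) + t ∧ phi8 (p s) ≤ phi8 (p (s+t)) + t := by
  intro s t
  induction t with
  | zero => simp
  | succ n ih =>
    have hstep := hp (s+n)
    have he : s + (n+1) = (s+n)+1 := rfl
    rw [he]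
    rcases hstep with h | h
    · have h2 := phi8_adj _ _ h
      omega
    · rw [← h]
      omega

/-! ### The two explicit solutions -/

-- time-optimal solution: robot 0 goes a→u2 immediately; robot 1 detours via c,d
def f0T : ℕ → Fin 8 := fun t => match t with
  | 0 => 0
  | _ + 1 => 3

def f1T : ℕ → Fin 8 := fun t => match t with
  | 0 => 1
  | 1 => 2
  | 2 => 6
  | 3 => 7
  | 4 => 4
  | _ + 5 => 5

-- makespan-optimal solution: robot 0 waits, robot 1 goes straight
def f0M : ℕ → Fin 8 := fun t => match t with
  | 0 => 0
  | 1 => 0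
  | 2 => 0
  | _ + 3 => 3

def f1M : ℕ → Fin 8 := fun t => match t with
  | 0 => 1
  | 1 => 2
  | 2 => 3
  | 3 => 4
  | _ + 4 => 5

def xI8 : Fin 2 → Fin 8 := ![0, 1]
def xG8 : Fin 2 → Fin 8 := ![3, 5]

lemma arrT0 : arrivalTime (3 : Fin 8) f0T = 1 :=
  arrivalTime_eq rfl (by intro j hj; interval_cases j; decide)

lemma arrT1 : arrivalTime (5 : Fin 8) f1T = 5 :=
  arrivalTime_eq rfl (by intro j hj; interval_cases j <;> decide)

lemma arrM0 : arrivalTime (3 : Fin 8) f0M = 3 :=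
  arrivalTime_eq rfl (by intro j hj; interval_cases j <;> decide)

lemma arrM1 : arrivalTime (5 : Fin 8) f1M = 4 :=
  arrivalTime_eq rfl (by intro j hj; interval_cases j <;> decide)

lemma feas_f0T : FeasiblePath G8 0 3 f0T := by
  refine ⟨rfl, ⟨1, rfl⟩, ?_, ?_⟩
  · rw [arrT0]
    intro t ht
    match t, ht with
    | n+1, _ => rfl
  · intro t
    match t with
    | 0 => exact Or.inl (by decide)
    | n+1 => exact Or.inr rfl

lemma feas_f1T : FeasiblePath G8 1 5 f1T := by
  refine ⟨rfl, ⟨5, rfl⟩, ?_, ?_⟩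
  · rw [arrT1]
    intro t ht
    match t, ht with
    | n+5, _ => rfl
  · intro t
    match t with
    | 0 => exact Or.inl (by decide)
    | 1 => exact Or.inl (by decide)
    | 2 => exact Or.inl (by decide)
    | 3 => exact Or.inl (by decide)
    | 4 => exact Or.inl (by decide)
    | n+5 => exact Or.inr rfl

lemma feas_f0M : FeasiblePath G8 0 3 f0M := by
  refine ⟨rfl, ⟨3, rfl⟩, ?_, ?_⟩
  · rw [arrM0]
    intro t ht
    match t, ht with
    | n+3, _ => rfl
  · intro t
    match t with
    | 0 => exact Or.inr rfl
    | 1 => exact Or.inr rfl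
    | 2 => exact Or.inl (by decide)
    | n+3 => exact Or.inr rfl

lemma feas_f1M : FeasiblePath G8 1 5 f1M := by
  refine ⟨rfl, ⟨4, rfl⟩, ?_, ?_⟩
  · rw [arrM1]
    intro t ht
    match t, ht with
    | n+4, _ => rfl
  · intro t
    match t with
    | 0 => exact Or.inl (by decide)
    | 1 => exact Or.inl (by decide)
    | 2 => exact Or.inl (by decide)
    | 3 => exact Or.inl (by decide)
    | n+4 => exact Or.inr rfl

lemma f0T_val : ∀ t, f0T t = 0 ∨ f0T t = 3 := by
  intro t
  match t with
  | 0 => exact Or.inl rfl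
  | n+1 => exact Or.inr rfl

lemma f1T_ne : ∀ t, f1T t ≠ 0 ∧ f1T t ≠ 3 := by
  intro t
  match t with
  | 0 => exact ⟨by decide, by decide⟩
  | 1 => exact ⟨by decide, by decide⟩
  | 2 => exact ⟨by decide, by decide⟩
  | 3 => exact ⟨by decide, by decide⟩
  | 4 => exact ⟨by decide, by decide⟩
  | n+5 => exact ⟨fun h => absurd (show (5:Fin 8) = 0 from h) (by decide),
      fun h => absurd (show (5:Fin 8) = 3 from h) (by decide)⟩

lemma noCollT : ¬ Collide f0T f1T := by
  rintro (⟨t, h⟩ | ⟨t, h1, h2, h3⟩)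
  · rcases f0T_val t with h0 | h0 <;> rw [h0] at h
    · exact (f1T_ne t).1 h.symm
    · exact (f1T_ne t).2 h.symm
  · rcases f0T_val t with h0 | h0 <;> rw [h0] at h1
    · exact (f1T_ne (t+1)).1 h1.symm
    · exact (f1T_ne (t+1)).2 h1.symm

lemma noCollT' : ¬ Collide f1T f0T := by
  rintro (⟨t, h⟩ | ⟨t, h1, h2, h3⟩)
  · rcases f0T_val t with h0 | h0 <;> rw [h0] at h
    · exact (f1T_ne t).1 h
    · exact (f1T_ne t).2 h
  · rcases f0T_val t with h0 | h0 <;> rw [h0] at h2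
    · exact (f1T_ne (t+1)).1 h2
    · exact (f1T_ne (t+1)).2 h2

lemma solT : IsSolution G8 xI8 xG8 ![f0T, f1T] := by
  constructor
  · intro i
    fin_cases i
    · exact feas_f0T
    · exact feas_f1T
  · intro i j hij
    fin_cases i <;> fin_cases j
    · exact absurd rfl hij
    · exact noCollT
    · exact noCollT'
    · exact absurd rfl hij

lemma noCollM : ¬ Collide f0M f1M := by
  rintro (⟨t, h⟩ | ⟨t, h1, h2, h3⟩)
  · match t, h with
    | 0, h => exact absurd (show (0:Fin 8) = 1 from h) (by decide)
    | 1, h => exact absurd (show (0:Fin 8) = 2 from h) (by decide)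
    | 2, h => exact absurd (show (0:Fin 8) = 3 from h) (by decide)
    | 3, h => exact absurd (show (3:Fin 8) = 4 from h) (by decide)
    | n+4, h => exact absurd (show (3:Fin 8) = 5 from h) (by decide)
  · match t, h1, h2 with
    | 0, h1, _ => exact absurd (show (0:Fin 8) = 2 from h1) (by decide)
    | 1, h1, _ => exact absurd (show (0:Fin 8) = 3 from h1) (by decide)
    | 2, h1, _ => exact absurd (show (0:Fin 8) = 4 from h1) (by decide)
    | 3, h1, _ => exact absurd (show (3:Fin 8) = 5 from h1) (by decide)
    | n+4, h1, _ => exact absurd (show (3:Fin 8) = 5 from h1) (by decide)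

lemma noCollM' : ¬ Collide f1M f0M := by
  rintro (⟨t, h⟩ | ⟨t, h1, h2, h3⟩)
  · match t, h with
    | 0, h => exact absurd (show (1:Fin 8) = 0 from h) (by decide)
    | 1, h => exact absurd (show (2:Fin 8) = 0 from h) (by decide)
    | 2, h => exact absurd (show (3:Fin 8) = 0 from h) (by decide)
    | 3, h => exact absurd (show (4:Fin 8) = 3 from h) (by decide)
    | n+4, h => exact absurd (show (5:Fin 8) = 3 from h) (by decide)
  · match t, h1, h2 with
    | 0, h1, _ => exact absurd (show (1:Fin 8) = 0 from h1) (by decide)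
    | 1, h1, _ => exact absurd (show (2:Fin 8) = 0 from h1) (by decide)
    | 2, _, h2 => exact absurd (show (4:Fin 8) = 0 from h2) (by decide)
    | 3, h1, _ => exact absurd (show (4:Fin 8) = 3 from h1) (by decide)
    | n+4, h1, _ => exact absurd (show (5:Fin 8) = 3 from h1) (by decide)

lemma solM : IsSolution G8 xI8 xG8 ![f0M, f1M] := by
  constructor
  · intro i
    fin_cases i
    · exact feas_f0M
    · exact feas_f1M
  · intro i j hij
    fin_cases i <;> fin_cases j
    · exact absurd rfl hij
    · exact noCollM
    · exact noCollM'
    · exact absurd rfl hij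

end MPPFormal

namespace MPPFormal

/-- There exists a solvable MPP instance such that every solution attaining
the minimum makespan has total arrival time strictly greater than the
minimum total arrival time. -/
theorem pareto_totalTime_makespan :
    ∃ (k : ℕ) (V : Type) (G : SimpleGraph V) (xI xG : Fin k → V),
      IsMPPInstance G xI xG ∧ (∃ p, IsSolution G xI xG p) ∧
      ∀ p, IsSolution G xI xG p → makespan xG p = minMakespan G xI xG →
        minTotalTime G xI xG < totalTime xG p := by
  refine ⟨2, Fin 8, G8, xI8, xG8, ⟨G8_conn, by decide, by decide⟩, ⟨_, solT⟩, ?_⟩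
  intro p hsol hmk
  have hxG0 : xG8 0 = 3 := rfl
  have hxG1 : xG8 1 = 5 := rfl
  -- minTotalTime ≤ 6 via the time-optimal solution
  have hTT : totalTime xG8 ![f0T, f1T] = 6 := by
    rw [totalTime, Fin.sum_univ_two]
    show arrivalTime (xG8 0) f0T + arrivalTime (xG8 1) f1T = 6
    rw [hxG0, hxG1, arrT0, arrT1]
  have hminT : minTotalTime G8 xI8 xG8 ≤ 6 := by
    have hm : (6 : ℕ) ∈ {c | ∃ q, IsSolution G8 xI8 xG8 q ∧ totalTime xG8 q = c} :=
      ⟨![f0T, f1T], solT, hTT⟩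
    exact Nat.sInf_le hm
  -- minMakespan ≤ 4 via the makespan-optimal solution
  have hMM : makespan xG8 ![f0M, f1M] ≤ 4 := by
    rw [makespan]
    refine Finset.sup_le ?_
    intro i _
    fin_cases i
    · show arrivalTime (xG8 0) f0M ≤ 4
      rw [hxG0, arrM0]; omega
    · show arrivalTime (xG8 1) f1M ≤ 4
      rw [hxG1, arrM1]
  have hminM : minMakespan G8 xI8 xG8 ≤ 4 := by
    have hm : makespan xG8 ![f0M, f1M] ∈
        {c | ∃ q, IsSolution G8 xI8 xG8 q ∧ makespan xG8 q = c} := ⟨![f0M, f1M], solM, rfl⟩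
    exact le_trans (Nat.sInf_le hm) hMM
  have hmk4 : makespan xG8 p ≤ 4 := by rw [hmk]; exact hminM
  obtain ⟨hfeas, hpw⟩ := hsol
  obtain ⟨hs1, hex1, hstay1, hmove1⟩ := hfeas 1
  obtain ⟨hs0, hex0, hstay0, hmove0⟩ := hfeas 0
  rw [hxG1] at hex1 hstay1
  rw [hxG0] at hex0 hstay0
  have hp10 : p 1 0 = 1 := hs1
  -- robot 1 arrives by time 4
  have ht2le : arrivalTime (5 : Fin 8) (p 1) ≤ 4 := by
    have hle : arrivalTime (xG8 1) (p 1) ≤ makespan xG8 p := by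
      rw [makespan]
      exact Finset.le_sup (f := fun i => arrivalTime (xG8 i) (p i)) (Finset.mem_univ (1 : Fin 2))
    rw [hxG1] at hle
    exact le_trans hle hmk4
  have hp14 : p 1 4 = 5 := hstay1 4 ht2le
  have hphi5 : phi8 5 = 0 := rfl
  have hphi1 : phi8 1 = 4 := rfl
  -- force p 1 1 = 2
  have hp11 : p 1 1 = 2 := by
    have hw := (phi8_walk hmove1 1 3).2
    have h4 : (1 + 3 : ℕ) = 4 := rfl
    rw [h4, hp14, hphi5] at hw
    have hstep := hmove1 0
    rw [hp10] at hstep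
    exact force1 _ hstep (by omega)
  -- force p 1 2 = 3
  have hp12 : p 1 2 = 3 := by
    have hw := (phi8_walk hmove1 2 2).2
    have h4 : (2 + 2 : ℕ) = 4 := rfl
    rw [h4, hp14, hphi5] at hw
    have hstep := hmove1 1
    rw [hp11] at hstep
    exact force2 _ hstep (by omega)
  -- robot 0 cannot have arrived by time 2
  have ht1ge : 3 ≤ arrivalTime (3 : Fin 8) (p 0) := by
    by_contra hc
    push_neg at hc
    have hp02 : p 0 2 = 3 := hstay0 2 (by omega)
    have hcol : Collide (p 0) (p 1) := Or.inl ⟨2, by rw [hp02, hp12]⟩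
    exact hpw (show (0 : Fin 2) ≠ 1 by decide) hcol
  -- robot 1 needs at least 4 steps
  have ht2ge : 4 ≤ arrivalTime (5 : Fin 8) (p 1) := by
    set t2 := arrivalTime (5 : Fin 8) (p 1) with ht2
    have hw := (phi8_walk hmove1 0 t2).2
    rw [Nat.zero_add] at hw
    have hpt2 : p 1 t2 = 5 := hstay1 t2 le_rfl
    rw [hp10, hpt2, hphi1, hphi5] at hw
    omega
  have hTot : totalTime xG8 p = arrivalTime (3 : Fin 8) (p 0) + arrivalTime (5 : Fin 8) (p 1) := by
    rw [totalTime, Fin.sum_univ_two, hxG0, hxG1]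
  rw [hTot]
  omega

end MPPFormal
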